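/- arXiv:1503.07432 — 6 statements merged into one kernel-verified Lean document; each statement's English description precedes it below -/
import Mathlib

section
/- For the sequence b̃ defined by b̃_0 = 5, b̃_1 = 5, b̃_n = 4b̃_{n-1} - b̃_{n-2}, and its associate sequence B̃ with B̃_1 = 10, B̃_2 = 50 (same recurrence), the identity B̃_n² - 12 b̃_n² = -200 holds for all n ≥ 1. -/
theorem stmt_4 (b B : ℕ → ℤ) (hb0 : b 0 = 5) (hb1 : b 1 = 5)
    (hb : ∀ n : ℕ, b (n + 2) = 4 * b (n + 1) - b n)
    (hB1 : B 1 = 10) (hB2 : B 2 = 50)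
    (hB : ∀ n : ℕ, B (n + 3) = 4 * B (n + 2) - B (n + 1)) :
    ∀ n : ℕ, 1 ≤ n → B n ^ 2 - 12 * b n ^ 2 = -200 := by
  have inv : ∀ n : ℕ, b (n + 1) ^ 2 - 4 * b (n + 1) * b n + b n ^ 2 = -50 := by
    intro n
    induction n with
    | zero => rw [hb0, hb1]; ring
    | succ k ih => rw [hb k]; nlinarith [ih]
  have hBn : ∀ n : ℕ, B (n + 1) = b (n + 2) - b n ∧ B (n + 2) = b (n + 3) - b (n + 1) := by
    intro n
    induction n with
    | zero =>
      constructor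
      · rw [hB1, hb 0, hb0, hb1]; ring
      · rw [hB2, hb 1, hb 0, hb0, hb1]; ring
    | succ k ih =>
      obtain ⟨h1, h2⟩ := ih
      refine ⟨h2, ?_⟩
      have h4 : b (k + 4) = 4 * b (k + 3) - b (k + 2) := hb (k + 2)
      have h5 := hb k
      rw [hB k, h1, h2, h4]; linarith
  intro n hn
  obtain ⟨m, rfl⟩ := Nat.exists_eq_add_of_le hn
  have h1 := (hBn m).1
  have h2 := hb m
  have h3 := inv m
  rw [show 1 + m = m + 1 by ring, h1, h2]
  linear_combination 4 * h3
end

section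
/- No term ã_n (n ≥ 1) of the sequence ã_1 = 5, ã_2 = 25, ã_n = 4ã_{n-1} - ã_{n-2} is divisible by 7, 11, 13, or 17. -/
private def step {m : ℕ} (p : ZMod m × ZMod m) : ZMod m × ZMod m :=
  (p.2, 4 * p.2 - p.1)

private lemma iterate_period {α : Type*} (f : α → α) (s : α) (T : ℕ)
    (hT : f^[T] s = s) (n : ℕ) : f^[n] s = f^[n % T] s := by
  conv_lhs => rw [← Nat.mod_add_div n T]
  rw [Function.iterate_add_apply]
  congr 1
  induction n / T with
  | zero => simp
  | succ q ih =>
    rw [Nat.mul_succ, Function.iterate_add_apply, hT, ih]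

private lemma iter_eq (a : ℕ → ℤ) (ha : ∀ n : ℕ, a (n + 3) = 4 * a (n + 2) - a (n + 1))
    (m : ℕ) : ∀ n : ℕ, ((a (n + 1) : ZMod m), (a (n + 2) : ZMod m)) =
      step^[n] ((a 1 : ZMod m), (a 2 : ZMod m)) := by
  intro n
  induction n with
  | zero => simp
  | succ k ih =>
    rw [Function.iterate_succ_apply', ← ih, step]
    have := ha k
    simp only [Prod.mk.injEq]
    constructor
    · trivial
    · push_cast [this]; ring

private lemma key (a : ℕ → ℤ) (ha1 : a 1 = 5) (ha2 : a 2 = 25)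
    (ha : ∀ n : ℕ, a (n + 3) = 4 * a (n + 2) - a (n + 1))
    (p T : ℕ) [NeZero p] (hT : 0 < T)
    (hper : step^[T] (((5 : ℤ) : ZMod p), ((25 : ℤ) : ZMod p)) = (((5 : ℤ) : ZMod p), ((25 : ℤ) : ZMod p)))
    (hnz : ∀ k < T, (step^[k] (((5 : ℤ) : ZMod p), ((25 : ℤ) : ZMod p))).1 ≠ 0)
    (n : ℕ) (hn : 1 ≤ n) : ¬ ((p : ℤ) ∣ a n) := by
  obtain ⟨k, rfl⟩ : ∃ k, n = k + 1 := ⟨n - 1, (Nat.succ_pred_eq_of_pos hn).symm⟩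
  rw [← ZMod.intCast_zmod_eq_zero_iff_dvd]
  have h := iter_eq a ha p k
  rw [ha1, ha2] at h
  have h1 : ((a (k + 1) : ZMod p)) = (step^[k] (((5 : ℤ) : ZMod p), ((25 : ℤ) : ZMod p))).1 := by
    rw [← h]
  rw [h1, iterate_period _ _ T hper]
  exact hnz _ (Nat.mod_lt _ hT)

theorem stmt_7 (a : ℕ → ℤ) (ha1 : a 1 = 5) (ha2 : a 2 = 25)
    (ha : ∀ n : ℕ, a (n + 3) = 4 * a (n + 2) - a (n + 1)) :
    ∀ n : ℕ, 1 ≤ n → ¬ (7 ∣ a n) ∧ ¬ (11 ∣ a n) ∧ ¬ (13 ∣ a n) ∧ ¬ (17 ∣ a n) := by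
  intro n hn
  refine ⟨?_, ?_, ?_, ?_⟩
  · exact key a ha1 ha2 ha 7 8 (by norm_num) (by decide) (by decide) n hn
  · exact key a ha1 ha2 ha 11 10 (by norm_num) (by decide) (by decide) n hn
  · exact key a ha1 ha2 ha 13 12 (by norm_num) (by decide) (by decide) n hn
  · exact key a ha1 ha2 ha 17 18 (by norm_num) (by decide) (by decide) n hn
end

section
/- No term b̃_n (n ≥ 1) of the sequence b̃_1 = 5, b̃_2 = 15, b̃_n = 4b̃_{n-1} - b̃_{n-2} is divisible by 2, 7, 13, 19, or 23. -/
lemma aux8 (b : ℕ → ℤ) (hb1 : b 1 = 5) (hb2 : b 2 = 15)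
    (hb : ∀ n : ℕ, b (n + 3) = 4 * b (n + 2) - b (n + 1))
    (p : ℕ) [NeZero p] (S : List (ZMod p × ZMod p))
    (h0 : ((5 : ZMod p), (15 : ZMod p)) ∈ S)
    (hcl : ∀ x y : ZMod p, (x, y) ∈ S → (y, 4 * y - x) ∈ S)
    (hnz : ∀ x y : ZMod p, (x, y) ∈ S → x ≠ 0) :
    ∀ n : ℕ, 1 ≤ n → ¬ ((p : ℤ) ∣ b n) := by
  have key : ∀ n : ℕ, (((b (n + 1) : ℤ) : ZMod p), ((b (n + 2) : ℤ) : ZMod p)) ∈ S := by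
    intro n
    induction n with
    | zero => rw [hb1, hb2]; push_cast; exact h0
    | succ k ih =>
        have h3 := hb k
        have : ((b (k + 3) : ℤ) : ZMod p)
            = 4 * ((b (k + 2) : ℤ) : ZMod p) - ((b (k + 1) : ℤ) : ZMod p) := by
          rw [h3]; push_cast; ring
        show (((b (k + 2) : ℤ) : ZMod p), ((b (k + 3) : ℤ) : ZMod p)) ∈ S
        rw [this]
        exact hcl _ _ ih
  intro n hn hdvd
  obtain ⟨k, rfl⟩ := Nat.exists_eq_add_of_le hn
  have h0' : ((b (1 + k) : ℤ) : ZMod p) = 0 :=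
    (ZMod.intCast_zmod_eq_zero_iff_dvd _ _).2 hdvd
  have := key k
  rw [Nat.add_comm 1 k] at h0'
  exact hnz _ _ this (by rw [h0'])

theorem stmt_8 (b : ℕ → ℤ) (hb1 : b 1 = 5) (hb2 : b 2 = 15)
    (hb : ∀ n : ℕ, b (n + 3) = 4 * b (n + 2) - b (n + 1)) :
    ∀ n : ℕ, 1 ≤ n →
      ¬ (2 ∣ b n) ∧ ¬ (7 ∣ b n) ∧ ¬ (13 ∣ b n) ∧ ¬ (19 ∣ b n) ∧ ¬ (23 ∣ b n) := by
  intro n hn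
  refine ⟨?_, ?_, ?_, ?_, ?_⟩
  · exact_mod_cast aux8 b hb1 hb2 hb 2 [(1,1)] (by decide) (by decide) (by decide) n hn
  · exact_mod_cast aux8 b hb1 hb2 hb 7
      [(5,1),(1,6),(6,2),(2,2),(2,6),(6,1),(1,5),(5,5)]
      (by decide) (by decide) (by decide) n hn
  · exact_mod_cast aux8 b hb1 hb2 hb 13
      [(5,2),(2,3),(3,10),(10,11),(11,8),(8,8),(8,11),(11,10),(10,3),(3,2),(2,5),(5,5)]
      (by decide) (by decide) (by decide) n hn
  · exact_mod_cast aux8 b hb1 hb2 hb 19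
      [(5,15),(15,17),(17,15),(15,5),(5,5)]
      (by decide) (by decide) (by decide) n hn
  · exact_mod_cast aux8 b hb1 hb2 hb 23
      [(5,15),(15,9),(9,21),(21,6),(6,3),(3,6),(6,21),(21,9),(9,15),(15,5),(5,5)]
      (by decide) (by decide) (by decide) n hn
end

section
/- If x = a_k for some k ≥ 1, then there exists a positive integer y with y² - (κ² - 4)x² = 4(κ+2)q², where κ = (p-2)(q-2) - 2. -/
theorem stmt_11 (p q : ℤ) (hp : 4 ≤ p) (hq : 4 ≤ q) (hpq : 4 < (p - 2) * (q - 2))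
    (a : ℕ → ℤ) (ha0 : a 0 = -q) (ha1 : a 1 = q)
    (ha : ∀ n : ℕ, a (n + 2) = ((p - 2) * (q - 2) - 2) * a (n + 1) - a n) :
    ∀ k : ℕ, 1 ≤ k → ∀ x : ℤ, x = a k →
      ∃ y : ℤ, 0 < y ∧
        y ^ 2 - (((p - 2) * (q - 2) - 2) ^ 2 - 4) * x ^ 2 =
          4 * (((p - 2) * (q - 2) - 2) + 2) * q ^ 2 := by
  set κ : ℤ := (p - 2) * (q - 2) - 2 with hκ
  have inv : ∀ n : ℕ, a (n+1) ^ 2 - κ * a (n+1) * a n + a n ^ 2 = (κ + 2) * q ^ 2 := by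
    intro n
    induction n with
    | zero => rw [ha0, ha1]; ring
    | succ m ih =>
      rw [ha m]
      nlinarith [ih]
  intro k hk x hx
  have hq0 : 0 < q ^ 2 := by positivity
  have hκ2 : 2 < κ := by nlinarith
  set Y : ℤ := 2 * a (k+1) - κ * a k with hY
  have key : Y ^ 2 - (κ ^ 2 - 4) * x ^ 2 = 4 * (κ + 2) * q ^ 2 := by
    rw [hx, hY]
    linear_combination 4 * inv k
  have hYpos : 0 < Y ^ 2 := by
    nlinarith [key, mul_nonneg (by nlinarith : (0:ℤ) ≤ κ ^ 2 - 4) (sq_nonneg x)]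
  have hYne : Y ≠ 0 := by
    intro h; rw [h] at hYpos; simp at hYpos
  exact ⟨|Y|, abs_pos.mpr hYne, by rw [sq_abs]; exact key⟩
end

section
/- If x = b_k for some k ≥ 1, then there exists an integer y with y² - (κ² - 4)x² = 4((p-3)² - κ(p-3) + 1)q², where κ = (p-2)(q-2) - 2. -/
theorem stmt_12 (p q : ℤ) (hp : 4 ≤ p) (hq : 4 ≤ q) (hpq : 4 < (p - 2) * (q - 2))
    (b : ℕ → ℤ) (hb0 : b 0 = q) (hb1 : b 1 = (p - 3) * q)
    (hb : ∀ n : ℕ, b (n + 2) = ((p - 2) * (q - 2) - 2) * b (n + 1) - b n) :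
    ∀ k : ℕ, 1 ≤ k → ∀ x : ℤ, x = b k →
      ∃ y : ℤ,
        y ^ 2 - (((p - 2) * (q - 2) - 2) ^ 2 - 4) * x ^ 2 =
          4 * ((p - 3) ^ 2 - ((p - 2) * (q - 2) - 2) * (p - 3) + 1) * q ^ 2 := by
  set κ : ℤ := (p - 2) * (q - 2) - 2 with hκ
  have inv : ∀ n : ℕ, b (n+1) ^ 2 - κ * b n * b (n+1) + b n ^ 2 =
      ((p - 3) ^ 2 - κ * (p - 3) + 1) * q ^ 2 := by
    intro n
    induction n with
    | zero => rw [hb0, hb1]; ring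
    | succ m ih => rw [hb m]; linear_combination ih
  intro k hk x hx
  refine ⟨2 * b (k+1) - κ * x, ?_⟩
  subst hx
  linear_combination 4 * inv k
end

section
/- For q = 5 (so a_2 = 15(p-2) - 5) and the sequence ã_1 = 5, ã_2 = 25, ã_n = 4ã_{n-1} - ã_{n-2}: for every t ∈ ℕ one has ã_{2+2t} ≡ -5 (mod 15); consequently for each t ≥ 1 there exists an integer p ≥ 4 with a_2 = ã_{2+2t}, namely p = (ã_{2+2t} + 5)/15 + 2. -/
theorem stmt_13 (a : ℕ → ℤ) (ha1 : a 1 = 5) (ha2 : a 2 = 25)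
    (ha : ∀ n : ℕ, a (n + 3) = 4 * a (n + 2) - a (n + 1)) :
    (∀ t : ℕ, (15 : ℤ) ∣ a (2 + 2 * t) + 5) ∧
    (∀ t : ℕ, 1 ≤ t → ∃ p : ℤ, 4 ≤ p ∧ 15 * (p - 2) - 5 = a (2 + 2 * t) ∧
      p = (a (2 + 2 * t) + 5) / 15 + 2) := by
  have key : ∀ t : ℕ, (15 : ℤ) ∣ a (2 + 2 * t) + 5 ∧ (15 : ℤ) ∣ a (3 + 2 * t) - 5 := by
    intro t
    induction t with
    | zero =>
      have h3 : a 3 = 95 := by have := ha 0; simp at this; omega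
      constructor <;> simp [ha2, h3] <;> decide
    | succ n ih =>
      obtain ⟨h1, h2⟩ := ih
      have e1 : a (2 + 2 * (n + 1)) = 4 * a (3 + 2 * n) - a (2 + 2 * n) := by
        have h := ha (2 * n + 1)
        have i1 : 2 * n + 1 + 3 = 2 + 2 * (n + 1) := by omega
        have i2 : 2 * n + 1 + 2 = 3 + 2 * n := by omega
        have i3 : 2 * n + 1 + 1 = 2 + 2 * n := by omega
        rw [i1, i2, i3] at h; exact h
      have e2 : a (3 + 2 * (n + 1)) = 4 * a (2 + 2 * (n + 1)) - a (3 + 2 * n) := by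
        have h := ha (2 * n + 2)
        have i1 : 2 * n + 2 + 3 = 3 + 2 * (n + 1) := by omega
        have i2 : 2 * n + 2 + 2 = 2 + 2 * (n + 1) := by omega
        have i3 : 2 * n + 2 + 1 = 3 + 2 * n := by omega
        rw [i1, i2, i3] at h; exact h
      constructor
      · rw [e1]; omega
      · rw [e2, e1]; omega
  have grow : ∀ n : ℕ, 25 ≤ a (n + 2) ∧ a (n + 2) ≤ a (n + 3) := by
    intro n
    induction n with
    | zero =>
      have h3 : a 3 = 95 := by have := ha 0; simp at this; omega
      show 25 ≤ a 2 ∧ a 2 ≤ a 3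
      omega
    | succ m ih =>
      have h1 := ha (m + 1)
      have h2 := ha m
      have i1 : m + 1 + 3 = m + 4 := by omega
      have i2 : m + 1 + 2 = m + 3 := by omega
      have i3 : m + 1 + 1 = m + 2 := by omega
      rw [i1, i2, i3] at h1
      show 25 ≤ a (m + 3) ∧ a (m + 3) ≤ a (m + 4)
      omega
  constructor
  · intro t; exact (key t).1
  · intro t ht
    have hd := (key t).1
    have hge : 25 ≤ a (2 + 2 * t) := by
      obtain ⟨k, hk⟩ : ∃ k, 2 + 2 * t = k + 2 + 2 := ⟨2 * t - 2, by omega⟩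
      rw [hk]
      have g1 := (grow k).1
      have g2 := (grow k).2
      have g3 := (grow (k + 1)).2
      have i1 : k + 1 + 2 = k + 3 := rfl
      have i2 : k + 1 + 3 = k + 2 + 2 := by omega
      rw [i1, i2] at g3
      omega
    obtain ⟨c, hc⟩ := hd
    have hdiv : (a (2 + 2 * t) + 5) / 15 = c := by omega
    refine ⟨c + 2, by omega, by omega, by omega⟩
end
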